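/- arXiv:1208.2578 — 3 statements merged into one kernel-verified Lean document; each statement's English description precedes it below -/
import Mathlib

section
/- Locality of the graphical construction (Lemma 5.1): let G^U ⊂ ℤ^d × [0,∞) × [0,1] be finite with pairwise distinct times, let G be its projection to ℤ^d × [0,∞), and let x ∈ ℤ^d. Define G^U_{<x} as follows: if G contains no point of the form (x,t), set G^U_{<x} = ∅; otherwise let T_x be the largest time t with (x,t) ∈ G and set G^U_{<x} := {(y,s,u) ∈ G^U : (y,s) = (x,T_x) or (y,s) <_G (x,T_x)}. Then for every η ∈ Ω, Ψ(η,G^U)(x) = Ψ(η,G^U_{<x})(x). -/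
/-- Sites of the lattice `ℤ^d`. -/
abbrev Site (d : ℕ) := Fin d → ℤ

/-- Spin configurations on `ℤ^d`; `true` encodes spin `+1`, `false` encodes spin `-1`. -/
abbrev Config (d : ℕ) := Site d → Bool

/-- A labelled resampling event `(x, t, u)`: site, time, uniform label. -/
abbrev Event (d : ℕ) := Site d × ℝ × ℝ

/-- ℓ¹ distance on `ℤ^d`. -/
def dist1 {d : ℕ} (x y : Site d) : ℤ := ∑ i, |x i - y i|

/-- Single heat-bath resampling step `Ψ(η,(x,u))`. -/
noncomputable def step {d : ℕ} (cplus : Site d → Config d → ℝ) (η : Config d)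
    (x : Site d) (u : ℝ) : Config d :=
  fun y => if y = x then (if u < cplus x η then true else false) else η y

/-- `Ψ(η, G^U)` for a finite labelled event set, represented by a list of events which is
assumed to be sorted by (pairwise distinct) times: the resampling steps are applied
successively, front of the list (earliest time) first. -/
noncomputable def applyEvents {d : ℕ} (cplus : Site d → Config d → ℝ)
    (η : Config d) : List (Event d) → Config d
  | [] => η
  | e :: rest => applyEvents cplus (step cplus η e.1 e.2.2) rest

/-- The projection `G` of a labelled event set `G^U` onto `ℤ^d × [0,∞)`. -/
def projG {d : ℕ} (l : List (Event d)) : Set (Site d × ℝ) :=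
  {p | ∃ u : ℝ, (p.1, p.2, u) ∈ l}

/-- The relation `<_G` on `ℤ^d × [0,∞)`. -/
def rel {d : ℕ} (G : Set (Site d × ℝ)) (p q : Site d × ℝ) : Prop :=
  (p.1 = q.1 ∧ p.2 < q.2) ∨
  ∃ (K : ℕ) (c : Fin (K + 1) → Site d × ℝ),
    (∀ m, c m ∈ G) ∧
    p.2 < (c 0).2 ∧
    (∀ m : Fin K, (c m.castSucc).2 < (c m.succ).2) ∧
    (c (Fin.last K)).2 ≤ q.2 ∧
    dist1 (c 0).1 p.1 = 1 ∧
    (∀ m : Fin K, dist1 (c m.succ).1 (c m.castSucc).1 = 1) ∧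
    (c (Fin.last K)).1 = q.1

lemma step_ne {d : ℕ} (cplus : Site d → Config d → ℝ) (η : Config d) (x : Site d) (u : ℝ)
    (y : Site d) (h : y ≠ x) : step cplus η x u y = η y := by simp [step, h]

lemma noChange {d : ℕ} (cplus : Site d → Config d → ℝ) (x : Site d) :
    ∀ (l : List (Event d)) (η : Config d), (∀ e ∈ l, e.1 ≠ x) →
      applyEvents cplus η l x = η x := by
  intro l
  induction l with
  | nil => intro η _; rfl
  | cons e rest ih =>
    intro η h
    simp only [applyEvents]
    rw [ih _ fun e' he' => h e' (List.mem_cons_of_mem _ he')]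
    exact step_ne _ _ _ _ _ (Ne.symm (h e (List.mem_cons_self)))

lemma dist1_comm {d : ℕ} (x y : Site d) : dist1 x y = dist1 y x := by
  unfold dist1; congr 1; funext i; exact abs_sub_comm _ _

lemma relMono {d : ℕ} (G : Set (Site d × ℝ)) (z : Site d) (t t' : ℝ) (q : Site d × ℝ)
    (h : t ≤ t') (hr : rel G (z, t') q) : rel G (z, t) q := by
  rcases hr with ⟨h1, h2⟩ | ⟨K, c, hc1, hc2, hc⟩
  · exact Or.inl ⟨h1, lt_of_le_of_lt h h2⟩
  · exact Or.inr ⟨K, c, hc1, lt_of_le_of_lt h hc2, hc⟩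

lemma relShrink {d : ℕ} (G G' : Set (Site d × ℝ)) (p q : Site d × ℝ)
    (hsub : ∀ r ∈ G, p.2 < r.2 → r ∈ G') (hr : rel G p q) : rel G' p q := by
  rcases hr with ⟨h1, h2⟩ | ⟨K, c, hc1, hc2, hc3, hc⟩
  · exact Or.inl ⟨h1, h2⟩
  · have hall : ∀ m : Fin (K + 1), p.2 < (c m).2 := by
      intro m
      induction m using Fin.induction with
      | zero => exact hc2
      | succ j ihj => exact lt_trans ihj (hc3 j)
    exact Or.inr ⟨K, c, fun m => hsub _ (hc1 m) (hall m), hc2, hc3, hc⟩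

lemma relSub {d : ℕ} (G G' : Set (Site d × ℝ)) (p q : Site d × ℝ)
    (hsub : G ⊆ G') (hr : rel G p q) : rel G' p q :=
  relShrink G G' p q (fun r hr _ => hsub hr) hr

lemma relStep {d : ℕ} (G : Set (Site d × ℝ)) (x : Site d) (Tx : ℝ) (y' z : Site d)
    (s' t : ℝ) (hG : (y', s') ∈ G) (hdist : dist1 y' z = 1) (ht : t < s')
    (h : (y' = x ∧ s' ≤ Tx) ∨ rel G (y', s') (x, Tx)) :
    rel G (z, t) (x, Tx) := by
  have base : y' = x → s' ≤ Tx → rel G (z, t) (x, Tx) := by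
    intro hyx hsT
    refine Or.inr ⟨0, fun _ => (y', s'), fun _ => hG, ht, fun m => m.elim0, hsT, hdist,
      fun m => m.elim0, hyx⟩
  rcases h with ⟨hyx, hsT⟩ | hrel
  · exact base hyx hsT
  rcases hrel with ⟨hyx, hsT⟩ | ⟨K, c, hc1, hc2, hc3, hc4, hc5, hc6, hc7⟩
  · exact base hyx (le_of_lt hsT)
  · refine Or.inr ⟨K + 1, Fin.cons (y', s') c, ?_, ?_, ?_, ?_, ?_, ?_, ?_⟩
    · intro m
      refine Fin.cases ?_ ?_ m
      · simpa using hG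
      · intro j; simpa using hc1 j
    · simpa using ht
    · intro m
      refine Fin.cases ?_ ?_ m
      · simpa using hc2
      · intro j
        have e1 : (Fin.cons (y', s') c : Fin (K + 2) → Site d × ℝ) j.succ.castSucc
            = c j.castSucc := by rw [← Fin.succ_castSucc, Fin.cons_succ]
        have e2 : (Fin.cons (y', s') c : Fin (K + 2) → Site d × ℝ) j.succ.succ
            = c j.succ := by rw [Fin.cons_succ]
        rw [e1, e2]; exact hc3 j
    · rw [← Fin.succ_last, Fin.cons_succ]; exact hc4
    · simpa using hdist
    · intro m
      refine Fin.cases ?_ ?_ m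
      · simpa using hc5
      · intro j
        have e1 : (Fin.cons (y', s') c : Fin (K + 2) → Site d × ℝ) j.succ.castSucc
            = c j.castSucc := by rw [← Fin.succ_castSucc, Fin.cons_succ]
        have e2 : (Fin.cons (y', s') c : Fin (K + 2) → Site d × ℝ) j.succ.succ
            = c j.succ := by rw [Fin.cons_succ]
        rw [e1, e2]; exact hc6 j
    · rw [← Fin.succ_last, Fin.cons_succ]; exact hc7

lemma influence {d : ℕ} (cplus : Site d → Config d → ℝ)
    (hNN : ∀ (x : Site d) (η η' : Config d),
      (∀ y, dist1 y x = 1 → η y = η' y) → cplus x η = cplus x η')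
    (x : Site d) (G : Set (Site d × ℝ)) (Tx : ℝ)
    (hmax : ∀ t, (x, t) ∈ G → t ≤ Tx) :
    ∀ (tail : List (Event d)), tail.Pairwise (fun a b => a.2.1 < b.2.1) →
    ∀ (η η' : Config d) (D : Set (Site d)) (t₀ : ℝ),
    (∀ e ∈ tail, (e.1, e.2.1) ∈ G) →
    (∀ e ∈ tail, t₀ < e.2.1) →
    (∀ z, z ∉ D → η z = η' z) →
    (∀ z ∈ D, z ≠ x ∧ ¬ rel G (z, t₀) (x, Tx)) →
    applyEvents cplus η tail x = applyEvents cplus η' tail x := by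
  intro tail
  induction tail with
  | nil =>
    intro _ η η' D t₀ _ _ hagree hD
    by_cases hx : x ∈ D
    · exact absurd rfl (hD x hx).1
    · exact hagree x hx
  | cons e rest ih =>
    intro hsort η η' D t₀ hGmem htime hagree hD
    have hsort' : rest.Pairwise (fun a b => a.2.1 < b.2.1) :=
      (List.pairwise_cons.1 hsort).2
    have hst : ∀ f ∈ rest, e.2.1 < f.2.1 := (List.pairwise_cons.1 hsort).1
    have hs' : t₀ < e.2.1 := htime e (List.mem_cons_self)
    have hGe : (e.1, e.2.1) ∈ G := hGmem e (List.mem_cons_self)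
    simp only [applyEvents]
    by_cases hnb : ∃ z ∈ D, dist1 z e.1 = 1
    · obtain ⟨z₀, hz₀D, hz₀d⟩ := hnb
      have hx1 : e.1 ≠ x := by
        intro hxe
        refine (hD z₀ hz₀D).2 (relStep G x Tx e.1 z₀ e.2.1 t₀ hGe (dist1_comm e.1 z₀ ▸ hz₀d) hs' ?_)
        exact Or.inl ⟨hxe, hmax _ (by rw [← hxe]; exact hGe)⟩
      have hx2 : ¬ rel G (e.1, e.2.1) (x, Tx) := by
        intro hrel
        exact (hD z₀ hz₀D).2 (relStep G x Tx e.1 z₀ e.2.1 t₀ hGe (dist1_comm e.1 z₀ ▸ hz₀d) hs' (Or.inr hrel))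
      refine ih hsort' _ _ (D ∪ {e.1}) e.2.1
        (fun f hf => hGmem f (List.mem_cons_of_mem _ hf)) hst ?_ ?_
      · intro z hz
        have hzD : z ∉ D := fun h => hz (Or.inl h)
        have hze : z ≠ e.1 := fun h => hz (Or.inr h)
        rw [step_ne _ _ _ _ _ hze, step_ne _ _ _ _ _ hze]
        exact hagree z hzD
      · intro z hz
        rcases hz with hz | hz
        · exact ⟨(hD z hz).1,
            fun hr => (hD z hz).2 (relMono G z t₀ e.2.1 _ (le_of_lt hs') hr)⟩
        · rcases hz with rfl
          exact ⟨hx1, hx2⟩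
    · have hcp : cplus e.1 η = cplus e.1 η' := by
        refine hNN e.1 η η' (fun w hw => hagree w (fun hwD => hnb ⟨w, hwD, hw⟩))
      refine ih hsort' _ _ D e.2.1
        (fun f hf => hGmem f (List.mem_cons_of_mem _ hf)) hst ?_ ?_
      · intro z hz
        by_cases hze : z = e.1
        · subst hze; simp [step, hcp]
        · rw [step_ne _ _ _ _ _ hze, step_ne _ _ _ _ _ hze]
          exact hagree z hz
      · intro z hz
        exact ⟨(hD z hz).1,
          fun hr => (hD z hz).2 (relMono G z t₀ e.2.1 _ (le_of_lt hs') hr)⟩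

lemma mainLemma {d : ℕ} (cplus : Site d → Config d → ℝ)
    (hNN : ∀ (x : Site d) (η η' : Config d),
      (∀ y, dist1 y x = 1 → η y = η' y) → cplus x η = cplus x η')
    (x : Site d) :
    ∀ (l : List (Event d)), l.Pairwise (fun a b => a.2.1 < b.2.1) →
    ∀ (η : Config d) (Tx : ℝ), (x, Tx) ∈ projG l →
    (∀ t : ℝ, (x, t) ∈ projG l → t ≤ Tx) →
    ∀ l' : List (Event d), l'.Sublist l →
    (∀ e : Event d, e ∈ l' ↔ (e ∈ l ∧
        ((e.1, e.2.1) = (x, Tx) ∨ rel (projG l) (e.1, e.2.1) (x, Tx)))) →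
    applyEvents cplus η l x = applyEvents cplus η l' x := by
  intro l
  induction l with
  | nil =>
    intro _ η Tx hTx _ _ _ _
    obtain ⟨u, hu⟩ := hTx
    simp at hu
  | cons e tail ih =>
    intro hsort η Tx hTx hmaxl l' hsub hchar
    have hsort' : tail.Pairwise (fun a b => a.2.1 < b.2.1) :=
      (List.pairwise_cons.1 hsort).2
    have hst : ∀ f ∈ tail, e.2.1 < f.2.1 := (List.pairwise_cons.1 hsort).1
    have he_nt : e ∉ tail := fun h => lt_irrefl _ (hst e h)
    have hGsub : projG tail ⊆ projG (e :: tail) := by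
      rintro p ⟨u, hu⟩; exact ⟨u, List.mem_cons_of_mem _ hu⟩
    have hGdown : ∀ p ∈ projG (e :: tail), e.2.1 < p.2 → p ∈ projG tail := by
      rintro p ⟨u, hu⟩ hlt
      rcases List.mem_cons.1 hu with h | h
      · exfalso
        have hpe : p.2 = e.2.1 := by rw [← h]
        exact lt_irrefl _ (hpe ▸ hlt)
      · exact ⟨u, h⟩
    have relT : ∀ p : Site d × ℝ, e.2.1 < p.2 →
        rel (projG (e :: tail)) p (x, Tx) → rel (projG tail) p (x, Tx) := by
      intro p hp hr
      exact relShrink _ _ _ _ (fun r hr' hlt => hGdown r hr' (lt_trans hp hlt)) hr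
    have relU : ∀ p : Site d × ℝ,
        rel (projG tail) p (x, Tx) → rel (projG (e :: tail)) p (x, Tx) :=
      fun p => relSub _ _ _ _ hGsub
    by_cases he' : e ∈ l'
    · -- e is kept
      cases hsub with
      | cons _ h => exact absurd (h.subset he') he_nt
      | cons_cons _ h =>
        rename_i m
        simp only [applyEvents]
        by_cases hex : e.1 = x ∧ e.2.1 = Tx
        · -- e is the last event at x; no x-events after it
          have hnx : ∀ f ∈ tail, f.1 ≠ x := by
            intro f hf hfx
            have hmem : (x, f.2.1) ∈ projG (e :: tail) :=
              ⟨f.2.2, by rw [← hfx]; exact List.mem_cons_of_mem _ hf⟩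
            have h1 := hmaxl _ hmem
            have h2 := hst f hf
            rw [hex.2] at h2
            exact absurd h1 (not_le.2 h2)
          rw [noChange cplus x tail _ hnx, noChange cplus x m _
            (fun f hf => hnx f (h.subset hf))]
        · have hTx' : (x, Tx) ∈ projG tail := by
            obtain ⟨u₁, hu₁⟩ := hTx
            rcases List.mem_cons.1 hu₁ with h1 | h1
            · exact absurd ⟨by rw [← h1], by rw [← h1]⟩ hex
            · exact ⟨u₁, h1⟩
          refine ih hsort' _ Tx hTx' (fun t ht => hmaxl t (hGsub ht)) m h ?_
          intro e'
          constructor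
          · intro hm
            have hl' : e' ∈ e :: m := List.mem_cons_of_mem _ hm
            obtain ⟨_, hcl⟩ := (hchar e').1 hl'
            have htl : e' ∈ tail := h.subset hm
            exact ⟨htl, hcl.imp id (relT _ (hst e' htl))⟩
          · rintro ⟨htl, hcl⟩
            have hl' : e' ∈ e :: m :=
              (hchar e').2 ⟨List.mem_cons_of_mem _ htl, hcl.imp id (relU _)⟩
            rcases List.mem_cons.1 hl' with h1 | h1
            · exact absurd (h1 ▸ htl) he_nt
            · exact h1
    · -- e is dropped
      have hsub' : l'.Sublist tail := by
        cases hsub with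
        | cons _ h => exact h
        | cons_cons _ h => exact absurd (List.mem_cons_self) he'
      have hncl : ¬ ((e.1, e.2.1) = (x, Tx) ∨
          rel (projG (e :: tail)) (e.1, e.2.1) (x, Tx)) :=
        fun hc => he' ((hchar e).2 ⟨List.mem_cons_self, hc⟩)
      have hex : e.1 ≠ x := by
        intro hxe
        have hmem : (x, e.2.1) ∈ projG (e :: tail) :=
          ⟨e.2.2, by rw [← hxe]; exact List.mem_cons_self⟩
        rcases lt_or_eq_of_le (hmaxl _ hmem) with hlt | heq
        · exact hncl (Or.inr (Or.inl ⟨hxe, hlt⟩))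
        · exact hncl (Or.inl (Prod.ext hxe heq))
      have hTx' : (x, Tx) ∈ projG tail := by
        obtain ⟨u₁, hu₁⟩ := hTx
        rcases List.mem_cons.1 hu₁ with h1 | h1
        · exact absurd (by rw [← h1] : e.1 = x) hex
        · exact ⟨u₁, h1⟩
      simp only [applyEvents]
      have h1 : applyEvents cplus (step cplus η e.1 e.2.2) tail x
          = applyEvents cplus η tail x := by
        refine influence cplus hNN x (projG (e :: tail)) Tx hmaxl tail hsort'
          _ _ {e.1} e.2.1 (fun f hf => ⟨f.2.2, List.mem_cons_of_mem _ hf⟩) hst ?_ ?_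
        · intro z hz
          exact step_ne _ _ _ _ _ (by simpa using hz)
        · intro z hz
          rcases hz with rfl
          exact ⟨hex, fun hr => hncl (Or.inr hr)⟩
      rw [h1]
      refine ih hsort' η Tx hTx' (fun t ht => hmaxl t (hGsub ht)) l' hsub' ?_
      intro e'
      constructor
      · intro hm
        obtain ⟨_, hcl⟩ := (hchar e').1 hm
        have htl : e' ∈ tail := hsub'.subset hm
        exact ⟨htl, hcl.imp id (relT _ (hst e' htl))⟩
      · rintro ⟨htl, hcl⟩
        exact (hchar e').2 ⟨List.mem_cons_of_mem _ htl, hcl.imp id (relU _)⟩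

/-- Locality of the graphical construction (Lemma 5.1):
`Ψ(η, G^U)(x) = Ψ(η, G^U_{<x})(x)`, where `G^U_{<x}` consists of the events `(y,s,u)` of
`G^U` with `(y,s) = (x,T_x)` or `(y,s) <_G (x,T_x)`, `T_x` being the largest time of an
event of `G` at site `x`; if there is no event at site `x` then `G^U_{<x} = ∅`. -/
theorem stmt2 {d : ℕ} (hd : 1 ≤ d) (cplus : Site d → Config d → ℝ)
    (hrange : ∀ x η, cplus x η ∈ Set.Icc (0 : ℝ) 1)
    (hNN : ∀ (x : Site d) (η η' : Config d),
      (∀ y, dist1 y x = 1 → η y = η' y) → cplus x η = cplus x η')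
    (l : List (Event d))
    (hsort : l.Pairwise (fun a b => a.2.1 < b.2.1))
    (htime : ∀ e ∈ l, 0 ≤ e.2.1)
    (hu : ∀ e ∈ l, e.2.2 ∈ Set.Icc (0 : ℝ) 1)
    (x : Site d) (η : Config d) :
    ((∀ e ∈ l, e.1 ≠ x) → applyEvents cplus η l x = η x) ∧
    (∀ Tx : ℝ, (x, Tx) ∈ projG l → (∀ t : ℝ, (x, t) ∈ projG l → t ≤ Tx) →
      ∀ l' : List (Event d), l'.Sublist l →
        (∀ e : Event d, e ∈ l' ↔ (e ∈ l ∧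
            ((e.1, e.2.1) = (x, Tx) ∨ rel (projG l) (e.1, e.2.1) (x, Tx)))) →
        applyEvents cplus η l x = applyEvents cplus η l' x) := by
  refine ⟨fun h => noChange cplus x l η h, ?_⟩
  intro Tx hTx hmax l' hsub hchar
  exact mainLemma cplus hNN x l hsort η Tx hTx hmax l' hsub hchar
end

section
/- Reordering lemma (Lemma 5.2): let G^U ⊂ ℤ^d × [0,∞) × [0,1] be finite with pairwise distinct times, let G be its projection to ℤ^d × [0,∞), and let A, B be a partition of G^U such that for no (x₁,t₁,u₁) ∈ A and (x₂,t₂,u₂) ∈ B one has (x₂,t₂) <_G (x₁,t₁) (in words: A does not happen after B). Then for every η ∈ Ω, Ψ(η, G^U) = Ψ(Ψ(η, A), B). -/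
lemma rel_mono {d : ℕ} {G G' : Set (Site d × ℝ)} (h : G ⊆ G') {p q : Site d × ℝ}
    (hr : rel G p q) : rel G' p q := by
  rcases hr with h1 | ⟨K, c, hm, h2, h3, h4, h5, h6, h7⟩
  · exact Or.inl h1
  · exact Or.inr ⟨K, c, fun m => h (hm m), h2, h3, h4, h5, h6, h7⟩

/-- From the no-after hypothesis: if `b` occurs strictly before `a` in time and `a ∈ l`,
then the sites of `a` and `b` are neither equal nor ℓ¹-adjacent. -/
lemma sites_far {d : ℕ} {l : List (Event d)} {a b : Event d} (ha : a ∈ l)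
    (hlt : b.2.1 < a.2.1)
    (hrel : ¬ rel (projG l) (b.1, b.2.1) (a.1, a.2.1)) :
    a.1 ≠ b.1 ∧ dist1 a.1 b.1 ≠ 1 := by
  constructor
  · intro h
    exact hrel (Or.inl ⟨h.symm, hlt⟩)
  · intro h
    apply hrel
    refine Or.inr ⟨0, fun _ => (a.1, a.2.1), fun m => ⟨a.2.2, ?_⟩, hlt,
      fun m => m.elim0, le_refl _, h, fun m => m.elim0, rfl⟩
    simpa using ha

lemma step_comm {d : ℕ} (cplus : Site d → Config d → ℝ)
    (hNN : ∀ (x : Site d) (η η' : Config d),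
      (∀ y, dist1 y x = 1 → η y = η' y) → cplus x η = cplus x η')
    (η : Config d) (x y : Site d) (u v : ℝ) (hxy : x ≠ y) (hdist : dist1 x y ≠ 1) :
    step cplus (step cplus η x u) y v = step cplus (step cplus η y v) x u := by
  have hcy : cplus y (step cplus η x u) = cplus y η := by
    apply hNN
    intro w hw
    unfold step
    rw [if_neg]
    intro hwx
    exact hdist (hwx ▸ hw)
  have hcx : cplus x (step cplus η y v) = cplus x η := by
    apply hNN
    intro w hw
    unfold step
    rw [if_neg]
    intro hwy
    apply hdist
    rw [dist1_comm]
    exact hwy ▸ hw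
  funext z
  unfold step at hcy hcx ⊢
  rw [hcy, hcx]
  by_cases hz1 : z = y
  · subst hz1
    simp [Ne.symm hxy]
  · by_cases hz2 : z = x
    · subst hz2
      simp [hxy, hz1]
    · simp [hz1, hz2]

lemma applyEvents_step_comm {d : ℕ} (cplus : Site d → Config d → ℝ)
    (hNN : ∀ (x : Site d) (η η' : Config d),
      (∀ y, dist1 y x = 1 → η y = η' y) → cplus x η = cplus x η')
    (A : List (Event d)) (x : Site d) (u : ℝ)
    (h : ∀ a ∈ A, a.1 ≠ x ∧ dist1 a.1 x ≠ 1) :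
    ∀ η : Config d,
      applyEvents cplus (step cplus η x u) A = step cplus (applyEvents cplus η A) x u := by
  induction A with
  | nil => intro η; rfl
  | cons a A' ih =>
    intro η
    have ha := h a (List.mem_cons_self)
    have hstep : step cplus (step cplus η x u) a.1 a.2.2
        = step cplus (step cplus η a.1 a.2.2) x u := by
      rw [step_comm cplus hNN η x a.1 u a.2.2 (fun he => ha.1 he.symm)
        (fun he => ha.2 (by rw [dist1_comm]; exact he))]
    show applyEvents cplus (step cplus (step cplus η x u) a.1 a.2.2) A' = _
    rw [hstep]
    exact ih (fun b hb => h b (List.mem_cons_of_mem _ hb)) (step cplus η a.1 a.2.2)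

lemma reorder_aux {d : ℕ} (cplus : Site d → Config d → ℝ)
    (hNN : ∀ (x : Site d) (η η' : Config d),
      (∀ y, dist1 y x = 1 → η y = η' y) → cplus x η = cplus x η') :
    ∀ (l : List (Event d)), l.Pairwise (fun a b => a.2.1 < b.2.1) →
    ∀ (A B : List (Event d)), A.Sublist l → B.Sublist l →
    (∀ e : Event d, e ∈ l ↔ (e ∈ A ∨ e ∈ B)) →
    (∀ e : Event d, ¬ (e ∈ A ∧ e ∈ B)) →
    (∀ a ∈ A, ∀ b ∈ B, ¬ rel (projG l) (b.1, b.2.1) (a.1, a.2.1)) →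
    ∀ η : Config d,
      applyEvents cplus η l = applyEvents cplus (applyEvents cplus η A) B := by
  intro l
  induction l with
  | nil =>
    intro _ A B hA hB _ _ _ η
    have hA0 : A = [] := List.sublist_nil.mp hA
    have hB0 : B = [] := List.sublist_nil.mp hB
    subst hA0; subst hB0; rfl
  | cons e l' ih =>
    intro hsort A B hA hB hcover hdisj hnoafter η
    have hsort' : l'.Pairwise (fun a b => a.2.1 < b.2.1) := hsort.of_cons
    have hlt : ∀ x ∈ l', e.2.1 < x.2.1 := (List.pairwise_cons.mp hsort).1
    have henl' : e ∉ l' := fun h => lt_irrefl _ (hlt e h)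
    have hmono : projG l' ⊆ projG (e :: l') := by
      intro p hp
      obtain ⟨u, hu⟩ := hp
      exact ⟨u, List.mem_cons_of_mem _ hu⟩
    have heAB : e ∈ A ∨ e ∈ B := (hcover e).mp (List.mem_cons_self)
    rcases heAB with heA | heB
    · -- e is the head of A
      have : ∃ A', A = e :: A' ∧ A'.Sublist l' := by
        cases hA with
        | cons _ h => exact absurd (h.mem heA) henl'
        | cons_cons _ h => exact ⟨_, rfl, h⟩
      obtain ⟨A', rfl, hA'⟩ := this
      have heB : e ∉ B := fun h => hdisj e ⟨List.mem_cons_self, h⟩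
      have hB' : B.Sublist l' := by
        cases hB with
        | cons _ h => exact h
        | cons_cons _ h => exact absurd (List.mem_cons_self) heB
      have hcover' : ∀ x : Event d, x ∈ l' ↔ (x ∈ A' ∨ x ∈ B) := by
        intro x
        constructor
        · intro hx
          rcases (hcover x).mp (List.mem_cons_of_mem _ hx) with hxA | hxB
          · rcases List.mem_cons.mp hxA with h | h
            · exact absurd (h ▸ hx) henl'
            · exact Or.inl h
          · exact Or.inr hxB
        · rintro (hx | hx)
          · exact hA'.mem hx
          · exact hB'.mem hx
      have hdisj' : ∀ x : Event d, ¬ (x ∈ A' ∧ x ∈ B) :=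
        fun x hx => hdisj x ⟨List.mem_cons_of_mem _ hx.1, hx.2⟩
      have hnoafter' : ∀ a ∈ A', ∀ b ∈ B, ¬ rel (projG l') (b.1, b.2.1) (a.1, a.2.1) :=
        fun a ha b hb hr =>
          hnoafter a (List.mem_cons_of_mem _ ha) b hb (rel_mono hmono hr)
      show applyEvents cplus (step cplus η e.1 e.2.2) l' = _
      exact ih hsort' A' B hA' hB' hcover' hdisj' hnoafter' (step cplus η e.1 e.2.2)
    · -- e is the head of B
      have : ∃ B', B = e :: B' ∧ B'.Sublist l' := by
        cases hB with
        | cons _ h => exact absurd (h.mem heB) henl'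
        | cons_cons _ h => exact ⟨_, rfl, h⟩
      obtain ⟨B', rfl, hB'⟩ := this
      have heA : e ∉ A := fun h => hdisj e ⟨h, List.mem_cons_self⟩
      have hA' : A.Sublist l' := by
        cases hA with
        | cons _ h => exact h
        | cons_cons _ h => exact absurd (List.mem_cons_self) heA
      -- sites of A-events are far from e's site
      have hfar : ∀ a ∈ A, a.1 ≠ e.1 ∧ dist1 a.1 e.1 ≠ 1 := by
        intro a ha
        have hal' : a ∈ l' := hA'.mem ha
        exact sites_far (List.mem_cons_of_mem _ hal') (hlt a hal')
          (hnoafter a ha e (List.mem_cons_self))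
      have hcover' : ∀ x : Event d, x ∈ l' ↔ (x ∈ A ∨ x ∈ B') := by
        intro x
        constructor
        · intro hx
          rcases (hcover x).mp (List.mem_cons_of_mem _ hx) with hxA | hxB
          · exact Or.inl hxA
          · rcases List.mem_cons.mp hxB with h | h
            · exact absurd (h ▸ hx) henl'
            · exact Or.inr h
        · rintro (hx | hx)
          · exact hA'.mem hx
          · exact hB'.mem hx
      have hdisj' : ∀ x : Event d, ¬ (x ∈ A ∧ x ∈ B') :=
        fun x hx => hdisj x ⟨hx.1, List.mem_cons_of_mem _ hx.2⟩
      have hnoafter' : ∀ a ∈ A, ∀ b ∈ B', ¬ rel (projG l') (b.1, b.2.1) (a.1, a.2.1) :=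
        fun a ha b hb hr =>
          hnoafter a ha b (List.mem_cons_of_mem _ hb) (rel_mono hmono hr)
      show applyEvents cplus (step cplus η e.1 e.2.2) l'
        = applyEvents cplus (step cplus (applyEvents cplus η A) e.1 e.2.2) B'
      rw [← applyEvents_step_comm cplus hNN A e.1 e.2.2 hfar η]
      exact ih hsort' A B' hA' hB' hcover' hdisj' hnoafter' (step cplus η e.1 e.2.2)

/-- Reordering lemma (Lemma 5.2): if `A`, `B` is a partition of the finite labelled event
set `G^U` (all lists sorted by pairwise distinct times) such that no event of `B` happens
`<_G`-before an event of `A`, then `Ψ(η, G^U) = Ψ(Ψ(η, A), B)`. -/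
theorem stmt3 {d : ℕ} (hd : 1 ≤ d) (cplus : Site d → Config d → ℝ)
    (hrange : ∀ x η, cplus x η ∈ Set.Icc (0 : ℝ) 1)
    (hNN : ∀ (x : Site d) (η η' : Config d),
      (∀ y, dist1 y x = 1 → η y = η' y) → cplus x η = cplus x η')
    (l : List (Event d))
    (hsort : l.Pairwise (fun a b => a.2.1 < b.2.1))
    (htime : ∀ e ∈ l, 0 ≤ e.2.1)
    (hu : ∀ e ∈ l, e.2.2 ∈ Set.Icc (0 : ℝ) 1)
    (A B : List (Event d)) (hA : A.Sublist l) (hB : B.Sublist l)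
    (hcover : ∀ e : Event d, e ∈ l ↔ (e ∈ A ∨ e ∈ B))
    (hdisj : ∀ e : Event d, ¬ (e ∈ A ∧ e ∈ B))
    (hnoafter : ∀ a ∈ A, ∀ b ∈ B, ¬ rel (projG l) (b.1, b.2.1) (a.1, a.2.1))
    (η : Config d) :
    applyEvents cplus η l = applyEvents cplus (applyEvents cplus η A) B := by
  exact reorder_aux cplus hNN l hsort A B hA hB hcover hdisj hnoafter η
end

section
/- Telescoping square bound (deterministic core of Lemma 6.2): let f : Ω → ℝ, ξ ∈ Ω, x, x₁, …, x_n ∈ ℤ^d and u, u₁, …, u_n ∈ [0,1]. Define ξ₀ := ξ, ξ̃₀ := Ψ(ξ,(x,u)), and recursively ξ_k := Ψ(ξ_{k−1},(x_k,u_k)) and ξ̃_k := Ψ(ξ̃_{k−1},(x_k,u_k)) for 1 ≤ k ≤ n. Then (f(ξ̃_n) − f(ξ_n))² ≤ (2n+1)·[ Σ_{k=1}^n (∇_{x_k} f(ξ̃_{k−1}))² + Σ_{k=1}^n (∇_{x_k} f(ξ_{k−1}))² + (∇_x f(ξ))² ]. -/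
/-- The configuration `η` flipped at site `x`. -/
def flipAt {d : ℕ} (η : Config d) (x : Site d) : Config d :=
  fun y => if y = x then !(η y) else η y

/-- `∇_x f(η) = f(η^x) − f(η)`. -/
def grad {d : ℕ} (x : Site d) (f : Config d → ℝ) (η : Config d) : ℝ :=
  f (flipAt η x) - f η

lemma step_cases {d : ℕ} (cplus : Site d → Config d → ℝ) (η : Config d)
    (x : Site d) (u : ℝ) :
    step cplus η x u = η ∨ step cplus η x u = flipAt η x := by
  by_cases h : (if u < cplus x η then true else false) = η x
  · left; funext y
    by_cases hy : y = x
    · subst hy; simp only [step, h]; simp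
    · simp only [step, if_neg hy]
  · right; funext y
    by_cases hy : y = x
    · subst hy
      simp only [step, flipAt, if_pos rfl]
      cases hb : η y <;> cases hc : (if u < cplus y η then true else false) <;> simp_all
    · simp only [step, flipAt, if_neg hy]

lemma step_sq {d : ℕ} (cplus : Site d → Config d → ℝ) (f : Config d → ℝ)
    (η : Config d) (x : Site d) (u : ℝ) :
    (f (step cplus η x u) - f η) ^ 2 ≤ (grad x f η) ^ 2 := by
  rcases step_cases cplus η x u with h | h <;> rw [h]
  · simpa using sq_nonneg (grad x f η)
  · simp [grad]

/-- Telescoping square bound (deterministic core of Lemma 6.2). -/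
theorem stmt5 {d : ℕ} (hd : 1 ≤ d) (cplus : Site d → Config d → ℝ)
    (f : Config d → ℝ) (ξ : Config d) (n : ℕ)
    (x : Site d) (xs : ℕ → Site d) (u : ℝ) (us : ℕ → ℝ)
    (hu : u ∈ Set.Icc (0 : ℝ) 1) (hus : ∀ k, 1 ≤ k → k ≤ n → us k ∈ Set.Icc (0 : ℝ) 1)
    (ξseq ξtseq : ℕ → Config d)
    (hξ0 : ξseq 0 = ξ) (hξt0 : ξtseq 0 = step cplus ξ x u)
    (hξ : ∀ k, k < n → ξseq (k + 1) = step cplus (ξseq k) (xs (k + 1)) (us (k + 1)))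
    (hξt : ∀ k, k < n → ξtseq (k + 1) = step cplus (ξtseq k) (xs (k + 1)) (us (k + 1))) :
    (f (ξtseq n) - f (ξseq n)) ^ 2 ≤
      (2 * n + 1) *
        ((∑ k ∈ Finset.range n, (grad (xs (k + 1)) f (ξtseq k)) ^ 2) +
         (∑ k ∈ Finset.range n, (grad (xs (k + 1)) f (ξseq k)) ^ 2) +
         (grad x f ξ) ^ 2) := by
  set g : ℕ → ℝ := fun k =>
    if k < n then f (ξtseq (k + 1)) - f (ξtseq k)
    else if k < 2 * n then -(f (ξseq (k - n + 1)) - f (ξseq (k - n)))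
    else f (ξtseq 0) - f (ξseq 0) with hg
  have hsplit : ∀ h : ℕ → ℝ, ∑ k ∈ Finset.range (2 * n + 1), h k =
      (∑ k ∈ Finset.range n, h k) + (∑ k ∈ Finset.range n, h (n + k)) + h (2 * n) := by
    intro h
    have : 2 * n + 1 = n + (n + 1) := by ring
    rw [this, Finset.sum_range_add, Finset.sum_range_succ, ← add_assoc, two_mul]
  have hgsum : ∑ k ∈ Finset.range (2 * n + 1), g k = f (ξtseq n) - f (ξseq n) := by
    rw [hsplit g]
    have h1 : ∑ k ∈ Finset.range n, g k
        = ∑ k ∈ Finset.range n, (f (ξtseq (k + 1)) - f (ξtseq k)) := by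
      refine Finset.sum_congr rfl fun k hk => ?_
      simp only [hg]
      rw [if_pos (Finset.mem_range.mp hk)]
    have h2 : ∑ k ∈ Finset.range n, g (n + k)
        = ∑ k ∈ Finset.range n, -(f (ξseq (k + 1)) - f (ξseq k)) := by
      refine Finset.sum_congr rfl fun k hk => ?_
      have hk' := Finset.mem_range.mp hk
      simp only [hg]
      rw [if_neg (by omega), if_pos (by omega)]
      rw [Nat.add_sub_cancel_left]
    have h3 : g (2 * n) = f (ξtseq 0) - f (ξseq 0) := by
      simp only [hg]
      rw [if_neg (by omega), if_neg (by omega)]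
    rw [h1, h2, h3, Finset.sum_range_sub (fun k => f (ξtseq k)),
      Finset.sum_neg_distrib, Finset.sum_range_sub (fun k => f (ξseq k))]
    ring
  have hCS := sq_sum_le_card_mul_sum_sq (s := Finset.range (2 * n + 1)) (f := g)
  rw [hgsum, Finset.card_range] at hCS
  have hsqsum : ∑ k ∈ Finset.range (2 * n + 1), g k ^ 2 ≤
      (∑ k ∈ Finset.range n, (grad (xs (k + 1)) f (ξtseq k)) ^ 2) +
      (∑ k ∈ Finset.range n, (grad (xs (k + 1)) f (ξseq k)) ^ 2) +
      (grad x f ξ) ^ 2 := by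
    rw [hsplit (fun k => g k ^ 2)]
    refine add_le_add (add_le_add ?_ ?_) ?_
    · refine Finset.sum_le_sum fun k hk => ?_
      have hk' := Finset.mem_range.mp hk
      simp only [hg]
      rw [if_pos hk', hξt k hk']
      exact step_sq cplus f (ξtseq k) (xs (k + 1)) (us (k + 1))
    · refine Finset.sum_le_sum fun k hk => ?_
      have hk' := Finset.mem_range.mp hk
      simp only [hg]
      rw [if_neg (by omega), if_pos (by omega), neg_sq,
        Nat.add_sub_cancel_left, hξ k hk']
      exact step_sq cplus f (ξseq k) (xs (k + 1)) (us (k + 1))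
    · simp only [hg]
      rw [if_neg (by omega), if_neg (by omega), hξt0, hξ0]
      exact step_sq cplus f ξ x u
  calc (f (ξtseq n) - f (ξseq n)) ^ 2 ≤ (2 * n + 1) * ∑ k ∈ Finset.range (2 * n + 1), g k ^ 2 := by
        exact_mod_cast hCS
    _ ≤ _ := by
        apply mul_le_mul_of_nonneg_left hsqsum
        positivity
end
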